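/- Let n ≥ 1. For g ∈ SL(n+1,ℂ) set σ(g) = I_{n,1}·(ḡᵀ)⁻¹·I_{n,1}, where I_{n,1} = diag(1,…,1,−1), and let ⟨z,w⟩_{n,1} = z₁w̄₁ + ⋯ + zₙw̄ₙ − z_{n+1}w̄_{n+1} for z, w ∈ ℂ^{n+1}. Then: (i) for all nonzero z, w, z', w' ∈ ℂ^{n+1} with ⟨z,w⟩_{n,1} ≠ 0 and ⟨z',w'⟩_{n,1} ≠ 0 there exist g ∈ SL(n+1,ℂ) and nonzero scalars λ, μ ∈ ℂ with g·z = λ·z' and σ(g)·w = μ·w'; (ii) the same conclusion holds when instead ⟨z,w⟩_{n,1} = 0 and ⟨z',w'⟩_{n,1} = 0. Consequently, under the action g·([z],[w]) = ([g·z],[σ(g)·w]) on pairs of lines, ℙⁿ × ℙⁿ consists of exactly two SL(n+1,ℂ)-orbits: the set {([z],[w]) : ⟨z,w⟩_{n,1} = 0} and its complement. -/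

import Mathlib

/-- The hermitian form `⟨z,w⟩_{n,1} = z₁w̄₁ + ⋯ + zₙw̄ₙ − z_{n+1}w̄_{n+1}` on `ℂ^{n+1}`. -/
noncomputable def hermForm (n : ℕ) (z w : Fin (n + 1) → ℂ) : ℂ :=
  (∑ i : Fin n, z i.castSucc * starRingEnd ℂ (w i.castSucc)) -
    z (Fin.last n) * starRingEnd ℂ (w (Fin.last n))

/-- The conjugation `σ(g) = I_{n,1} (ḡᵀ)⁻¹ I_{n,1}` of `SL(n+1,ℂ)` relative to `SU(n,1)`. -/
noncomputable def sigmaConj (n : ℕ) (g : Matrix (Fin (n + 1)) (Fin (n + 1)) ℂ) :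
    Matrix (Fin (n + 1)) (Fin (n + 1)) ℂ :=
  Matrix.diagonal (fun i => if i = Fin.last n then (-1 : ℂ) else 1) * g.conjTranspose⁻¹ *
    Matrix.diagonal (fun i => if i = Fin.last n then (-1 : ℂ) else 1)

/-- `(z,w)` and `(z',w')` span pairs of lines in the same `SL(n+1,ℂ)`-orbit for the twisted
action `g·([z],[w]) = ([g·z],[σ(g)·w])`. -/
def relatedPairs (n : ℕ) (z w z' w' : Fin (n + 1) → ℂ) : Prop :=
  ∃ (g : Matrix (Fin (n + 1)) (Fin (n + 1)) ℂ) (lam mu : ℂ),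
    g.det = 1 ∧ lam ≠ 0 ∧ mu ≠ 0 ∧
    g.mulVec z = lam • z' ∧ (sigmaConj n g).mulVec w = mu • w'

open Matrix

namespace Stmt10

variable {n : ℕ}

noncomputable def J (n : ℕ) : Matrix (Fin (n+1)) (Fin (n+1)) ℂ :=
  Matrix.diagonal (fun i => if i = Fin.last n then (-1 : ℂ) else 1)

lemma J_mul_J : J n * J n = 1 := by
  rw [J, Matrix.diagonal_mul_diagonal]
  have : (fun i : Fin (n+1) => (if i = Fin.last n then (-1:ℂ) else 1) *
      (if i = Fin.last n then (-1:ℂ) else 1)) = fun _ => (1:ℂ) := by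
    funext i; split_ifs <;> ring
  rw [this, Matrix.diagonal_one]

lemma J_map_star : (J n).map (starRingEnd ℂ) = J n := by
  ext i j
  simp only [J, Matrix.map_apply, Matrix.diagonal_apply]
  split_ifs <;> simp

/-- covector associated to `w`: `hermForm z w = cw w ⬝ᵥ z`. -/
noncomputable def cw (n : ℕ) (w : Fin (n+1) → ℂ) : Fin (n+1) → ℂ :=
  fun i => (if i = Fin.last n then (-1:ℂ) else 1) * (starRingEnd ℂ) (w i)

lemma cw_eq (w : Fin (n+1) → ℂ) : cw n w = star ((J n).mulVec w) := by
  funext i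
  simp only [cw, Pi.star_apply, J, Matrix.mulVec_diagonal]
  split_ifs <;> simp [star_mul', mul_comm]

lemma cw_ne {w : Fin (n+1) → ℂ} (hw : w ≠ 0) : cw n w ≠ 0 := by
  intro h
  apply hw
  funext i
  have := congrFun h i
  simp only [cw, Pi.zero_apply, mul_eq_zero] at this
  rcases this with h' | h'
  · split_ifs at h' <;> simp_all
  · simpa using h'

lemma herm_eq (z w : Fin (n+1) → ℂ) : hermForm n z w = cw n w ⬝ᵥ z := by
  show _ = ∑ i, cw n w i * z i
  rw [hermForm, Fin.sum_univ_castSucc]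
  rw [sub_eq_add_neg]
  congr 1
  · refine Finset.sum_congr rfl fun j _ => ?_
    simp only [cw]
    rw [if_neg (Fin.castSucc_lt_last j).ne]
    ring
  · simp only [cw]
    norm_num
    ring

lemma herm_smul (a b : ℂ) (z w : Fin (n+1) → ℂ) :
    hermForm n (a • z) (b • w) = a * (starRingEnd ℂ) b * hermForm n z w := by
  simp only [hermForm, Pi.smul_apply, smul_eq_mul, mul_sub, Finset.mul_sum]
  congr 1
  · refine Finset.sum_congr rfl fun j _ => ?_
    rw [_root_.map_mul]
    ring
  · rw [_root_.map_mul]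
    ring

/-- dot product with `u` as a linear functional. -/
noncomputable def dpL (u : Fin (n+1) → ℂ) : (Fin (n+1) → ℂ) →ₗ[ℂ] ℂ where
  toFun x := u ⬝ᵥ x
  map_add' x y := by
    simp only [dotProduct, Pi.add_apply, mul_add, Finset.sum_add_distrib]
  map_smul' c x := by
    simp only [dotProduct, Pi.smul_apply, smul_eq_mul, RingHom.id_apply, Finset.mul_sum]
    exact Finset.sum_congr rfl fun i _ => by ring

@[simp] lemma dpL_apply (u x : Fin (n+1) → ℂ) : dpL u x = u ⬝ᵥ x := rfl


lemma star_mulVec' (M : Matrix (Fin (n+1)) (Fin (n+1)) ℂ) (v : Fin (n+1) → ℂ) :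
    star (M.mulVec v) = (M.map (starRingEnd ℂ)).mulVec (star v) := by
  funext i
  simp only [Pi.star_apply, Matrix.mulVec, dotProduct, Matrix.map_apply]
  rw [star_sum]
  exact Finset.sum_congr rfl fun j _ => by rw [star_mul']; rfl

lemma map_inv' {M : Matrix (Fin (n+1)) (Fin (n+1)) ℂ} (h : IsUnit M.det) :
    (M⁻¹).map (starRingEnd ℂ) = (M.map (starRingEnd ℂ))⁻¹ := by
  symm
  apply Matrix.inv_eq_right_inv
  rw [← Matrix.map_mul, Matrix.mul_nonsing_inv _ h]
  ext i j
  simp [Matrix.map_apply, Matrix.one_apply, apply_ite]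

lemma conjTranspose_map_star (g : Matrix (Fin (n+1)) (Fin (n+1)) ℂ) :
    (g.conjTranspose).map (starRingEnd ℂ) = g.transpose := by
  ext i j
  simp [Matrix.conjTranspose_apply, Matrix.map_apply, Matrix.transpose_apply]

lemma sigmaConj_eq (g : Matrix (Fin (n+1)) (Fin (n+1)) ℂ) :
    sigmaConj n g = J n * g.conjTranspose⁻¹ * J n := rfl

lemma sigma_mulVec {g : Matrix (Fin (n+1)) (Fin (n+1)) ℂ} (hdet : g.det = 1)
    {w w' : Fin (n+1) → ℂ} {ρ : ℂ} (hρ : ρ ≠ 0)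
    (h : Matrix.vecMul (cw n w') g = ρ • cw n w) :
    (sigmaConj n g).mulVec w = ((starRingEnd ℂ) ρ)⁻¹ • w' := by
  have hH : IsUnit (g.conjTranspose).det := by
    rw [Matrix.det_conjTranspose, hdet]
    simp
  have hsr : (starRingEnd ℂ) ρ ≠ 0 := by simpa using hρ
  -- main identity
  have E : (g.conjTranspose).mulVec ((J n).mulVec w') = (starRingEnd ℂ) ρ • ((J n).mulVec w) := by
    have h2 := congrArg star h
    rw [← Matrix.mulVec_transpose g (cw n w')] at h2
    rw [star_mulVec'] at h2
    have hst : star (cw n w') = (J n).mulVec w' := by rw [cw_eq, star_star]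
    have hst2 : star (ρ • cw n w) = (starRingEnd ℂ) ρ • ((J n).mulVec w) := by
      rw [cw_eq, star_smul, star_star, starRingEnd_apply]
    rw [hst, hst2] at h2
    have htm : (g.transpose).map (starRingEnd ℂ) = g.conjTranspose := by
      ext i j
      simp [Matrix.conjTranspose_apply, Matrix.map_apply, Matrix.transpose_apply]
    rw [htm] at h2
    exact h2
  have hw : (J n).mulVec w = ((starRingEnd ℂ) ρ)⁻¹ • ((g.conjTranspose).mulVec ((J n).mulVec w')) := by
    rw [E, inv_smul_smul₀ hsr]
  rw [sigmaConj_eq, ← Matrix.mulVec_mulVec, hw, Matrix.mulVec_smul]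
  congr 1
  rw [Matrix.mulVec_mulVec, Matrix.mul_assoc (J n),
    Matrix.nonsing_inv_mul _ hH, Matrix.mul_one, Matrix.mulVec_mulVec, J_mul_J,
    Matrix.one_mulVec]

lemma herm_inv {g : Matrix (Fin (n+1)) (Fin (n+1)) ℂ} (hdet : g.det = 1)
    (z w : Fin (n+1) → ℂ) :
    hermForm n (g.mulVec z) ((sigmaConj n g).mulVec w) = hermForm n z w := by
  have hT : IsUnit (g.transpose).det := by rw [Matrix.det_transpose, hdet]; exact isUnit_one
  have hH : IsUnit (g.conjTranspose).det := by
    rw [Matrix.det_conjTranspose, hdet]; simp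
  rw [herm_eq, herm_eq]
  have hcw : cw n ((sigmaConj n g).mulVec w)
      = ((g.transpose)⁻¹ * J n).mulVec (star w) := by
    rw [cw_eq]
    have h1 : (J n).mulVec ((sigmaConj n g).mulVec w)
        = ((g.conjTranspose⁻¹ * J n)).mulVec w := by
      rw [sigmaConj_eq, Matrix.mulVec_mulVec]
      rw [Matrix.mul_assoc (J n) (g.conjTranspose⁻¹) (J n), ← Matrix.mul_assoc (J n) (J n) _,
        J_mul_J, Matrix.one_mul]
    rw [h1, star_mulVec', Matrix.map_mul, J_map_star, map_inv' hH, conjTranspose_map_star]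
  rw [hcw, dotProduct_comm, dotProduct_mulVec]
  have h2 : Matrix.vecMul (g.mulVec z) ((g.transpose)⁻¹ * J n) = Matrix.vecMul z (J n) := by
    have h3 : g.mulVec z = Matrix.vecMul z g.transpose := by
      rw [← Matrix.mulVec_transpose g.transpose z, Matrix.transpose_transpose]
    rw [h3, Matrix.vecMul_vecMul, ← Matrix.mul_assoc, Matrix.mul_nonsing_inv _ hT,
      Matrix.one_mul]
  rw [h2]
  show ∑ i, _ = ∑ i, _
  refine Finset.sum_congr rfl fun i _ => ?_
  simp only [J, Matrix.vecMul_diagonal, cw, Pi.star_apply]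
  rw [starRingEnd_apply]
  ring


lemma master {ι : Type} [Fintype ι] [DecidableEq ι] [Nonempty ι]
    (B B' : Module.Basis ι ℂ (Fin (n+1) → ℂ)) (iz i0 : ι) {z z' u v : Fin (n+1) → ℂ} {ρ : ℂ}
    (hBz : B iz = z) (hB'z : B' iz = z') (h0 : u ⬝ᵥ B i0 = 0) (hρ : ρ ≠ 0)
    (hfun : ∀ i, v ⬝ᵥ B' i = ρ * (u ⬝ᵥ B i)) :
    ∃ (g : Matrix (Fin (n+1)) (Fin (n+1)) ℂ) (lam ρ' : ℂ), g.det = 1 ∧ lam ≠ 0 ∧ ρ' ≠ 0 ∧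
      g.mulVec z = lam • z' ∧ Matrix.vecMul v g = ρ' • u := by
  classical
  let T := B.equiv B' (Equiv.refl ι)
  set d : ℂ := LinearMap.det (T : (Fin (n+1) → ℂ) →ₗ[ℂ] (Fin (n+1) → ℂ)) with hd
  have hdne : d ≠ 0 := (T.isUnit_det').ne_zero
  set δ : ι → ℂ := fun i => if i = i0 then d⁻¹ else 1 with hδdef
  have hδ : ∀ i, δ i ≠ 0 := by
    intro i
    by_cases h : i = i0 <;> simp [hδdef, h, inv_ne_zero hdne]
  set D : (Fin (n+1) → ℂ) →ₗ[ℂ] (Fin (n+1) → ℂ) := Matrix.toLin B B (Matrix.diagonal δ) with hD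
  have hDB : ∀ i, D (B i) = δ i • B i := by
    intro i
    rw [hD, Matrix.toLin_self]
    rw [Finset.sum_eq_single i]
    · rw [Matrix.diagonal_apply_eq]
    · intro j _ hj
      rw [Matrix.diagonal_apply_ne _ hj, zero_smul]
    · intro hi
      exact absurd (Finset.mem_univ i) hi
  set g' : (Fin (n+1) → ℂ) →ₗ[ℂ] (Fin (n+1) → ℂ) := (T : (Fin (n+1) → ℂ) →ₗ[ℂ] _) ∘ₗ D with hg'
  have hTB : ∀ i, T (B i) = B' i := fun i => B.equiv_apply i B' (Equiv.refl ι)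
  have hdet' : LinearMap.det g' = 1 := by
    rw [hg', LinearMap.det_comp, ← hd, hD, LinearMap.det_toLin, Matrix.det_diagonal, hδdef]
    rw [Finset.prod_ite_eq' Finset.univ i0 (fun _ => d⁻¹)]
    simp [mul_inv_cancel₀ hdne]
  have hmul : ∀ x, (LinearMap.toMatrix' g').mulVec x = g' x := fun x => by
    rw [← Matrix.toLin'_apply, Matrix.toLin'_toMatrix']
  have key : (dpL v).comp g' = ρ • dpL u := by
    apply B.ext
    intro i
    simp only [LinearMap.comp_apply, LinearMap.smul_apply, dpL_apply, smul_eq_mul, hg',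
      LinearMap.coe_comp, Function.comp_apply]
    rw [hDB i, _root_.map_smul]
    simp only [LinearEquiv.coe_coe]
    rw [hTB i]
    rw [dotProduct_smul, hfun i]
    by_cases hi : i = i0
    · subst hi
      rw [h0]
      simp
    · simp [hδdef, hi]
  refine ⟨LinearMap.toMatrix' g', δ iz, ρ, ?_, hδ iz, hρ, ?_, ?_⟩
  · rw [LinearMap.det_toMatrix']
    exact hdet'
  · rw [hmul, ← hBz]
    show T (D (B iz)) = δ iz • z'
    rw [hDB iz, _root_.map_smul, hTB iz, hB'z]
  · funext j
    have h1 : Matrix.vecMul v (LinearMap.toMatrix' g') j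
        = ((dpL v).comp g') (Pi.single j 1) := by
      simp only [LinearMap.comp_apply, dpL_apply]
      rw [← hmul, Matrix.mulVec_single]
      simp [Matrix.vecMul, dotProduct]
    rw [h1, key]
    simp only [LinearMap.smul_apply, dpL_apply, smul_eq_mul, Pi.smul_apply]
    rw [dotProduct_single]
    ring


lemma basis1 {u z : Fin (n+1) → ℂ} (h : u ⬝ᵥ z ≠ 0) :
    ∃ B : Module.Basis (Fin (n+1)) ℂ (Fin (n+1) → ℂ),
      B (Fin.last n) = z ∧ ∀ j : Fin n, u ⬝ᵥ B j.castSucc = 0 := by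
  classical
  set f : (Fin (n+1) → ℂ) →ₗ[ℂ] ℂ := dpL u with hf
  have hsurj : Function.Surjective f := by
    intro a
    refine ⟨(a / (u ⬝ᵥ z)) • z, ?_⟩
    rw [hf, _root_.map_smul]
    simp only [dpL_apply, smul_eq_mul]
    field_simp
  have hrank := LinearMap.finrank_range_add_finrank_ker f
  rw [LinearMap.range_eq_top.mpr hsurj, finrank_top, Module.finrank_self,
    Module.finrank_fin_fun] at hrank
  have hker : Module.finrank ℂ (LinearMap.ker f) = n := by omega
  let kb := (Module.finBasis ℂ (LinearMap.ker f)).reindex (finCongr hker)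
  set fam : Fin (n+1) → (Fin (n+1) → ℂ) :=
    Fin.snoc (fun j => ((kb j : LinearMap.ker f) : Fin (n+1) → ℂ)) z with hfam
  have hspan : Submodule.span ℂ (Set.range fun j => ((kb j : LinearMap.ker f) : Fin (n+1) → ℂ))
      = LinearMap.ker f := by
    have : (fun j => ((kb j : LinearMap.ker f) : Fin (n+1) → ℂ))
        = (LinearMap.ker f).subtype ∘ kb := rfl
    rw [this, Set.range_comp, Submodule.span_image, kb.span_eq, Submodule.map_top,
      Submodule.range_subtype]
  have hli : LinearIndependent ℂ fam := by
    rw [hfam, linearIndependent_fin_snoc]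
    constructor
    · exact kb.linearIndependent.map' (LinearMap.ker f).subtype (Submodule.ker_subtype _)
    · rw [hspan]
      intro hz
      rw [LinearMap.mem_ker, hf] at hz
      exact h hz
  have hcard : Fintype.card (Fin (n+1)) = Module.finrank ℂ (Fin (n+1) → ℂ) := by
    simp [Module.finrank_fin_fun]
  refine ⟨basisOfLinearIndependentOfCardEqFinrank hli hcard, ?_, ?_⟩
  · rw [coe_basisOfLinearIndependentOfCardEqFinrank, hfam]
    exact Fin.snoc_last _ _
  · intro j
    rw [coe_basisOfLinearIndependentOfCardEqFinrank, hfam]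
    rw [show (Fin.snoc (fun j => ((kb j : LinearMap.ker f) : Fin (n+1) → ℂ)) z : Fin (n+1) → _)
      j.castSucc = _ from Fin.snoc_castSucc _ _ j]
    exact (kb j).2

set_option synthInstance.maxHeartbeats 1000000 in
set_option maxHeartbeats 1000000 in
lemma basis2 (hn : 1 ≤ n) {u z : Fin (n+1) → ℂ} (hu : u ≠ 0) (hz : z ≠ 0)
    (h : u ⬝ᵥ z = 0) :
    ∃ B : Module.Basis (Fin (n-1+1+1)) ℂ (Fin (n+1) → ℂ),
      B (Fin.castSucc (Fin.last (n-1))) = z ∧ (u ⬝ᵥ B (Fin.last (n-1+1)) = 1) ∧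
      ∀ k : Fin (n-1+1), u ⬝ᵥ B k.castSucc = 0 := by
  classical
  set f : (Fin (n+1) → ℂ) →ₗ[ℂ] ℂ := dpL u with hf
  obtain ⟨j, hj⟩ : ∃ j, u j ≠ 0 := by
    by_contra hc
    push_neg at hc
    exact hu (funext fun j => hc j)
  set p : Fin (n+1) → ℂ := fun i => if i = j then (u j)⁻¹ else 0 with hp
  have hup : u ⬝ᵥ p = 1 := by
    rw [hp]
    simp only [dotProduct, mul_ite, mul_zero]
    rw [Finset.sum_ite_eq' Finset.univ j (fun i => u i * (u j)⁻¹)]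
    simp [mul_inv_cancel₀ hj]
  have hsurj : Function.Surjective f := by
    intro a
    refine ⟨a • p, ?_⟩
    rw [hf, _root_.map_smul]
    simp only [dpL_apply, smul_eq_mul, hup, mul_one]
  have hrank := LinearMap.finrank_range_add_finrank_ker f
  rw [LinearMap.range_eq_top.mpr hsurj, finrank_top, Module.finrank_self,
    Module.finrank_fin_fun] at hrank
  have hker : Module.finrank ℂ (LinearMap.ker f) = n := by omega
  set W := LinearMap.ker f with hW
  have hzW : z ∈ W := by rw [hW, LinearMap.mem_ker, hf]; exact h
  set zW : W := ⟨z, hzW⟩ with hzWdef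
  have hzWne : zW ≠ 0 := by
    intro hc
    apply hz
    exact congrArg Subtype.val hc
  obtain ⟨φ, hφ⟩ : ∃ φ : Module.Dual ℂ W, φ zW ≠ 0 := by
    by_contra hc
    push_neg at hc
    exact hzWne ((Module.forall_dual_apply_eq_zero_iff ℂ zW).mp hc)
  set ξ : Module.Dual ℂ W := (φ zW)⁻¹ • φ with hξdef
  have hξ : ξ zW = 1 := by
    rw [hξdef]
    simp [inv_mul_cancel₀ hφ]
  have hξsurj : Function.Surjective ξ := by
    intro a
    refine ⟨a • zW, ?_⟩
    rw [_root_.map_smul, hξ]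
    simp
  have hrank2 := LinearMap.finrank_range_add_finrank_ker ξ
  rw [LinearMap.range_eq_top.mpr hξsurj, finrank_top, Module.finrank_self, hker] at hrank2
  have hker2 : Module.finrank ℂ (LinearMap.ker ξ) = n - 1 := by omega
  have hWmem : ∀ x, x ∈ W ↔ u ⬝ᵥ x = 0 := fun x => by
    rw [hW, LinearMap.mem_ker, hf]; rfl
  have hzWval : (zW : Fin (n+1) → ℂ) = z := rfl
  clear hf hp hW hzWdef hξdef hφ
  clear_value f p W zW ξ
  haveI : Module.Free ℂ (LinearMap.ker ξ) := by
    exact Module.Free.of_divisionRing ℂ ↥(LinearMap.ker ξ)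
  let kb2 := (Module.finBasis ℂ (LinearMap.ker ξ)).reindex (finCongr hker2)
  set famW : Fin (n-1+1) → W := Fin.snoc (fun j => ((kb2 j : LinearMap.ker ξ) : W)) zW
    with hfamW
  have hspanW : Submodule.span ℂ (Set.range fun j => ((kb2 j : LinearMap.ker ξ) : W))
      = LinearMap.ker ξ := by
    have : (fun j => ((kb2 j : LinearMap.ker ξ) : W)) = (LinearMap.ker ξ).subtype ∘ kb2 := rfl
    rw [this, Set.range_comp, Submodule.span_image, kb2.span_eq, Submodule.map_top,
      Submodule.range_subtype]
  have hliW : LinearIndependent ℂ famW := by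
    rw [hfamW, linearIndependent_fin_snoc]
    constructor
    · have e : (fun j => ((kb2 j : LinearMap.ker ξ) : W)) = (LinearMap.ker ξ).subtype ∘ kb2 := rfl
      rw [e]
      exact kb2.linearIndependent.map_injOn _
        (Set.injOn_of_injective (LinearMap.ker ξ).injective_subtype)
    · rw [hspanW]
      intro hc
      rw [LinearMap.mem_ker, hξ] at hc
      exact one_ne_zero hc
  have hcardW : Fintype.card (Fin (n-1+1)) = Module.finrank ℂ W := by
    rw [hker]
    simp only [Fintype.card_fin]
    omega
  set basisW : Module.Basis (Fin (n-1+1)) ℂ W := basisOfLinearIndependentOfCardEqFinrank hliW hcardW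
    with hbW
  have hbWcoe : ⇑basisW = famW := coe_basisOfLinearIndependentOfCardEqFinrank hliW hcardW
  set famV : Fin (n-1+1+1) → (Fin (n+1) → ℂ) :=
    Fin.snoc (fun k => ((basisW k : W) : Fin (n+1) → ℂ)) p with hfamV
  have hspanV : Submodule.span ℂ (Set.range fun k => ((basisW k : W) : Fin (n+1) → ℂ)) = W := by
    have : (fun k => ((basisW k : W) : Fin (n+1) → ℂ)) = W.subtype ∘ basisW := rfl
    rw [this, Set.range_comp, Submodule.span_image, basisW.span_eq, Submodule.map_top,
      Submodule.range_subtype]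
  have hliV : LinearIndependent ℂ famV := by
    rw [hfamV, linearIndependent_fin_snoc]
    constructor
    · exact basisW.linearIndependent.map' W.subtype (Submodule.ker_subtype _)
    · rw [hspanV]
      intro hc
      rw [hWmem p, hup] at hc
      exact one_ne_zero hc
  have hcardV : Fintype.card (Fin (n-1+1+1)) = Module.finrank ℂ (Fin (n+1) → ℂ) := by
    rw [Module.finrank_fin_fun]
    simp only [Fintype.card_fin]
    omega
  refine ⟨basisOfLinearIndependentOfCardEqFinrank hliV hcardV, ?_, ?_, ?_⟩
  · rw [coe_basisOfLinearIndependentOfCardEqFinrank, hfamV]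
    rw [show (Fin.snoc (fun k => ((basisW k : W) : Fin (n+1) → ℂ)) p : Fin (n-1+1+1) → _)
      (Fin.castSucc (Fin.last (n-1))) = _ from Fin.snoc_castSucc _ _ (Fin.last (n-1))]
    rw [show basisW (Fin.last (n-1)) = famW (Fin.last (n-1)) from congrFun hbWcoe _, hfamW]
    rw [Fin.snoc_last]
    exact hzWval
  · rw [coe_basisOfLinearIndependentOfCardEqFinrank, hfamV, Fin.snoc_last]
    exact hup
  · intro k
    rw [coe_basisOfLinearIndependentOfCardEqFinrank, hfamV]
    rw [show (Fin.snoc (fun k => ((basisW k : W) : Fin (n+1) → ℂ)) p : Fin (n-1+1+1) → _)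
      k.castSucc = _ from Fin.snoc_castSucc _ _ k]
    exact (hWmem _).mp (basisW k).2

end Stmt10

/-- Example 4.7: under the action `g·([z],[w]) = ([g·z],[σ(g)·w])`, the space
`ℙⁿ × ℙⁿ` consists of exactly two `SL(n+1,ℂ)`-orbits, the set `{⟨z,w⟩_{n,1} = 0}` and its
complement. -/


theorem stmt_10 (n : ℕ) (hn : 1 ≤ n) :
    (∀ z w z' w' : Fin (n + 1) → ℂ, z ≠ 0 → w ≠ 0 → z' ≠ 0 → w' ≠ 0 →
      hermForm n z w ≠ 0 → hermForm n z' w' ≠ 0 → relatedPairs n z w z' w') ∧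
    (∀ z w z' w' : Fin (n + 1) → ℂ, z ≠ 0 → w ≠ 0 → z' ≠ 0 → w' ≠ 0 →
      hermForm n z w = 0 → hermForm n z' w' = 0 → relatedPairs n z w z' w') ∧
    (∀ z w z' w' : Fin (n + 1) → ℂ, z ≠ 0 → w ≠ 0 → z' ≠ 0 → w' ≠ 0 →
      hermForm n z w = 0 → hermForm n z' w' ≠ 0 → ¬ relatedPairs n z w z' w') := by
  refine ⟨?_, ?_, ?_⟩
  · intro z w z' w' hz hw hz' hw' hzw hzw'
    rw [Stmt10.herm_eq] at hzw hzw'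
    obtain ⟨B, hB1, hB2⟩ := Stmt10.basis1 hzw
    obtain ⟨B', hB'1, hB'2⟩ := Stmt10.basis1 hzw'
    have hρ : (Stmt10.cw n w' ⬝ᵥ z') / (Stmt10.cw n w ⬝ᵥ z) ≠ 0 := div_ne_zero hzw' hzw
    have hfun : ∀ i, Stmt10.cw n w' ⬝ᵥ B' i
        = ((Stmt10.cw n w' ⬝ᵥ z') / (Stmt10.cw n w ⬝ᵥ z)) * (Stmt10.cw n w ⬝ᵥ B i) := by
      intro i
      induction i using Fin.lastCases with
      | last =>
        rw [hB1, hB'1]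
        field_simp
      | cast j =>
        rw [hB2 j, hB'2 j, mul_zero]
    have h0 : Stmt10.cw n w ⬝ᵥ B ((⟨0, hn⟩ : Fin n).castSucc) = 0 := hB2 _
    obtain ⟨g, lam, ρ', hdet, hlam, hρ', hg, hvec⟩ :=
      Stmt10.master B B' (Fin.last n) ((⟨0, hn⟩ : Fin n).castSucc) hB1 hB'1 h0 hρ hfun
    exact ⟨g, lam, ((starRingEnd ℂ) ρ')⁻¹, hdet, hlam,
      inv_ne_zero (by simpa using hρ'), hg, Stmt10.sigma_mulVec hdet hρ' hvec⟩
  · intro z w z' w' hz hw hz' hw' hzw hzw'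
    rw [Stmt10.herm_eq] at hzw hzw'
    obtain ⟨B, hBz, hBp, hB0⟩ := Stmt10.basis2 hn (Stmt10.cw_ne hw) hz hzw
    obtain ⟨B', hB'z, hB'p, hB'0⟩ := Stmt10.basis2 hn (Stmt10.cw_ne hw') hz' hzw'
    have hfun : ∀ i, Stmt10.cw n w' ⬝ᵥ B' i = 1 * (Stmt10.cw n w ⬝ᵥ B i) := by
      intro i
      induction i using Fin.lastCases with
      | last => rw [hBp, hB'p, mul_one]
      | cast k => rw [hB0 k, hB'0 k, mul_zero]
    obtain ⟨g, lam, ρ', hdet, hlam, hρ', hg, hvec⟩ :=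
      Stmt10.master B B' (Fin.castSucc (Fin.last (n-1))) (Fin.castSucc (Fin.last (n-1)))
        hBz hB'z (by rw [hBz]; exact hzw) one_ne_zero hfun
    exact ⟨g, lam, ((starRingEnd ℂ) ρ')⁻¹, hdet, hlam,
      inv_ne_zero (by simpa using hρ'), hg, Stmt10.sigma_mulVec hdet hρ' hvec⟩
  · intro z w z' w' hz hw hz' hw' hzw hzw'
    rintro ⟨g, lam, mu, hdet, hlam, hmu, hgz, hgw⟩
    apply hzw'
    have hinv := Stmt10.herm_inv hdet z w
    rw [hgz, hgw, Stmt10.herm_smul, hzw] at hinv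
    have hc : lam * (starRingEnd ℂ) mu ≠ 0 :=
      mul_ne_zero hlam (by simpa using hmu)
    exact (mul_eq_zero.mp hinv).resolve_left hc
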